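/- Let ξ be an exponentially distributed random variable with mean μ > 0, and let a ≥ 0, b > 0 be constants. Then log₂(a + b·μ) − γ·log₂(e) ≤ E[log₂(a + b·ξ)] ≤ log₂(a + b·μ), where γ is the Euler–Mascheroni constant. -/

import Mathlib

open MeasureTheory Real Set

open Filter

namespace ExpJensen

local notation "γ" => Real.eulerMascheroniConstant

lemma integral_log_mul_exp_neg :
    ∫ t in Ioi (0:ℝ), Real.log t * Real.exp (-t) = -γ := by
  have h1 := Complex.hasDerivAt_GammaIntegral (s := 1) (by norm_num)
  set D : ℝ := ∫ t in Ioi (0:ℝ), Real.log t * Real.exp (-t) with hD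
  have hint : (∫ t : ℝ in Ioi 0, (t:ℂ) ^ ((1:ℂ) - 1) * (Real.log t * Real.exp (-t)))
      = (D : ℂ) := by
    have e1 : (∫ t : ℝ in Ioi 0, (t:ℂ) ^ ((1:ℂ) - 1) * (Real.log t * Real.exp (-t)))
        = ∫ t : ℝ in Ioi 0, ((Real.log t * Real.exp (-t) : ℝ) : ℂ) := by
      refine setIntegral_congr_fun measurableSet_Ioi fun t ht => ?_
      rw [sub_self, Complex.cpow_zero, one_mul]
      push_cast
      ring
    rw [e1, hD]
    have cc : ∀ r : ℝ, Complex.ofReal r = @RCLike.ofReal ℂ _ r := fun r => rfl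
    conv_lhs => enter [2, t]; rw [cc]
    rw [integral_ofReal, ← cc]
  rw [hint] at h1
  have hre : ∀ᶠ s : ℂ in nhds 1, 0 < s.re := by
    have ho : IsOpen {s : ℂ | 0 < s.re} := isOpen_lt continuous_const Complex.continuous_re
    exact eventually_of_mem (ho.mem_nhds (by norm_num)) fun s hs => hs
  have h2 : HasDerivAt Complex.Gamma (D : ℂ) 1 := by
    refine h1.congr_of_eventuallyEq ?_
    filter_upwards [hre] with s hs using Complex.Gamma_eq_integral hs
  exact_mod_cast h2.unique Complex.hasDerivAt_Gamma_one

variable {a b c μ : ℝ}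

lemma int_exp (hc : 0 < c) : IntegrableOn (fun x => rexp (-(c*x))) (Ioi (0:ℝ)) := by
  simpa [neg_mul] using exp_neg_integrableOn_Ioi 0 hc

lemma int_x_exp (hc : 0 < c) : IntegrableOn (fun x => x * rexp (-(c*x))) (Ioi (0:ℝ)) := by
  simpa [rpow_one, neg_mul] using
    integrableOn_rpow_mul_exp_neg_mul_rpow (s := 1) (p := 1) (by norm_num) one_pos hc

lemma int_sqrt_exp (hc : 0 < c) :
    IntegrableOn (fun x => x ^ (-(2⁻¹:ℝ)) * rexp (-(c*x))) (Ioi (0:ℝ)) := by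
  have := integrableOn_rpow_mul_exp_neg_mul_rpow (s := -(2⁻¹:ℝ)) (p := 1) (by norm_num) one_pos hc
  simpa [rpow_one, neg_mul] using this

lemma abs_log_le {x : ℝ} (hx : 0 < x) : |Real.log x| ≤ 2 * x ^ (-(2⁻¹:ℝ)) + x := by
  have hr : (0:ℝ) < x ^ (-(2⁻¹:ℝ)) := rpow_pos_of_pos hx _
  rcases le_or_gt 1 x with h1 | h1
  · rw [abs_of_nonneg (Real.log_nonneg h1)]
    have := Real.log_le_sub_one_of_pos hx
    nlinarith
  · rw [abs_of_nonpos (Real.log_nonpos hx.le h1.le)]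
    have h2 := Real.log_le_sub_one_of_pos hr
    rw [Real.log_rpow hx] at h2
    nlinarith

lemma int_abslog_exp (hc : 0 < c) :
    IntegrableOn (fun x => |Real.log x| * rexp (-(c*x))) (Ioi (0:ℝ)) := by
  have hg : IntegrableOn (fun x => 2 * (x ^ (-(2⁻¹:ℝ)) * rexp (-(c*x))) + x * rexp (-(c*x)))
      (Ioi (0:ℝ)) := ((int_sqrt_exp hc).const_mul 2).add (int_x_exp hc)
  refine hg.mono' ?_ ?_
  · exact (Real.measurable_log.abs.mul
      (Real.measurable_exp.comp (measurable_const.mul measurable_id).neg)).aestronglyMeasurable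
  · rw [ae_restrict_iff' measurableSet_Ioi]
    refine ae_of_all _ fun x hx => ?_
    have hx0 : (0:ℝ) < x := hx
    have he : (0:ℝ) < rexp (-(c*x)) := exp_pos _
    have := abs_log_le hx0
    rw [Real.norm_eq_abs, abs_mul, abs_of_pos he, abs_abs]
    nlinarith

lemma int_log_exp (hc : 0 < c) :
    IntegrableOn (fun x => Real.log x * rexp (-(c*x))) (Ioi (0:ℝ)) := by
  refine (int_abslog_exp hc).mono' ?_ ?_
  · exact (Real.measurable_log.mul
      (Real.measurable_exp.comp (measurable_const.mul measurable_id).neg)).aestronglyMeasurable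
  · refine ae_of_all _ fun x => ?_
    have he : (0:ℝ) < rexp (-(c*x)) := exp_pos _
    rw [Real.norm_eq_abs, abs_mul, abs_of_pos he]

lemma abs_log_le_of_le {y z : ℝ} (hy : 0 < y) (hyz : y ≤ z) :
    |Real.log z| ≤ |Real.log y| + z := by
  have hz : 0 < z := lt_of_lt_of_le hy hyz
  rcases le_or_gt 1 z with h1 | h1
  · rw [abs_of_nonneg (Real.log_nonneg h1)]
    have := Real.log_le_sub_one_of_pos hz
    have := abs_nonneg (Real.log y)
    linarith
  · rw [abs_of_nonpos (Real.log_nonpos hz.le h1.le),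
      abs_of_nonpos (Real.log_nonpos hy.le (hyz.trans h1.le))]
    have := Real.log_le_log hy hyz
    linarith

lemma int_logab_exp (ha : 0 ≤ a) (hb : 0 < b) (hc : 0 < c) :
    IntegrableOn (fun x => Real.log (a + b*x) * rexp (-(c*x))) (Ioi (0:ℝ)) := by
  have hg : IntegrableOn
      (fun x => (|Real.log b| + a) * rexp (-(c*x)) + |Real.log x| * rexp (-(c*x))
        + b * (x * rexp (-(c*x)))) (Ioi (0:ℝ)) :=
    (((int_exp hc).const_mul _).add (int_abslog_exp hc)).add ((int_x_exp hc).const_mul b)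
  refine hg.mono' ?_ ?_
  · exact ((Real.measurable_log.comp (measurable_const.add (measurable_id.const_mul b))).mul
      (Real.measurable_exp.comp (measurable_const.mul measurable_id).neg)).aestronglyMeasurable
  · rw [ae_restrict_iff' measurableSet_Ioi]
    refine ae_of_all _ fun x hx => ?_
    have hx0 : (0:ℝ) < x := hx
    have hbx : (0:ℝ) < b * x := mul_pos hb hx0
    have he : (0:ℝ) < rexp (-(c*x)) := exp_pos _
    have h1 : |Real.log (a + b*x)| ≤ |Real.log (b*x)| + (a + b*x) :=
      abs_log_le_of_le hbx (by linarith)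
    have h2 : |Real.log (b*x)| ≤ |Real.log b| + |Real.log x| := by
      rw [Real.log_mul hb.ne' hx0.ne']
      exact abs_add_le _ _
    rw [Real.norm_eq_abs, abs_mul, abs_of_pos he]
    nlinarith [abs_nonneg (Real.log (a + b*x))]

lemma eq_exp (hμ : 0 < μ) : ∫ x in Ioi (0:ℝ), rexp (-(μ⁻¹*x)) = μ := by
  have h := integral_comp_mul_left_Ioi (fun t => rexp (-t)) 0 (inv_pos.2 hμ)
  simp only [mul_zero, integral_exp_neg_Ioi_zero, inv_inv, smul_eq_mul, mul_one] at h
  exact h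

lemma unit_x_exp : ∫ t in Ioi (0:ℝ), t * rexp (-t) = 1 := by
  have h2 : Real.Gamma 2 = 1 := by
    rw [(by norm_num : (2:ℝ) = (1:ℕ) + 1), Real.Gamma_nat_eq_factorial]
    simp
  rw [Real.Gamma_eq_integral (by norm_num : (0:ℝ) < 2)] at h2
  rw [← h2]
  refine setIntegral_congr_fun measurableSet_Ioi fun t ht => ?_
  rw [(by norm_num : (2:ℝ) - 1 = 1), rpow_one]
  ring

lemma eq_x_exp (hμ : 0 < μ) : ∫ x in Ioi (0:ℝ), x * rexp (-(μ⁻¹*x)) = μ^2 := by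
  have h := integral_comp_mul_left_Ioi (fun t => t * rexp (-t)) 0 (inv_pos.2 hμ)
  simp only [mul_zero, unit_x_exp, smul_eq_mul, mul_one, inv_inv] at h
  have h2 : ∫ x in Ioi (0:ℝ), μ⁻¹ * x * rexp (-(μ⁻¹*x))
      = μ⁻¹ * ∫ x in Ioi (0:ℝ), x * rexp (-(μ⁻¹*x)) := by
    rw [← integral_const_mul _ _]
    refine setIntegral_congr_fun measurableSet_Ioi fun x hx => by ring
  rw [h2] at h
  have hμ' : μ ≠ 0 := hμ.ne'
  field_simp at h ⊢
  nlinarith [h]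

lemma eq_log_exp (hμ : 0 < μ) :
    ∫ x in Ioi (0:ℝ), Real.log x * rexp (-(μ⁻¹*x)) = μ * (Real.log μ - γ) := by
  have h := integral_comp_mul_left_Ioi (fun t => Real.log t * rexp (-t)) 0 (inv_pos.2 hμ)
  simp only [mul_zero, integral_log_mul_exp_neg, smul_eq_mul, inv_inv] at h
  have h2 : ∫ x in Ioi (0:ℝ), Real.log (μ⁻¹ * x) * rexp (-(μ⁻¹*x))
      = (Real.log μ⁻¹) * μ + ∫ x in Ioi (0:ℝ), Real.log x * rexp (-(μ⁻¹*x)) := by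
    have e1 : ∫ x in Ioi (0:ℝ), Real.log (μ⁻¹ * x) * rexp (-(μ⁻¹*x))
        = ∫ x in Ioi (0:ℝ), (Real.log μ⁻¹ * rexp (-(μ⁻¹*x)) + Real.log x * rexp (-(μ⁻¹*x))) := by
      refine setIntegral_congr_fun measurableSet_Ioi fun x hx => ?_
      rw [Real.log_mul (inv_ne_zero hμ.ne') (ne_of_gt hx)]
      ring
    rw [e1, integral_add ((int_exp (inv_pos.2 hμ)).const_mul _) (int_log_exp (inv_pos.2 hμ)),
      integral_const_mul _ _, eq_exp hμ]
  rw [h2] at h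
  rw [Real.log_inv] at h
  nlinarith [h]

end ExpJensen

namespace ExpJensen2
open ExpJensen

variable {a b μ : ℝ}

lemma pointwise_upper (hμ : 0 < μ) (ha : 0 ≤ a) (hb : 0 < b) {x : ℝ} (hx : 0 < x) :
    Real.log (a + b*x)
      ≤ (Real.log (a + b*μ) - (b/(a+b*μ))*μ) + (b/(a+b*μ))*x := by
  have hm : 0 < a + b*μ := by nlinarith
  have hax : 0 < a + b*x := by nlinarith
  have h := Real.log_le_sub_one_of_pos (div_pos hax hm)
  rw [Real.log_div hax.ne' hm.ne'] at h
  have e2 : (a+b*x)/(a+b*μ) - 1 = (b/(a+b*μ))*x - (b/(a+b*μ))*μ := by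
    field_simp
    ring
  linarith

lemma pointwise_lower (hμ : 0 < μ) (ha : 0 ≤ a) (hb : 0 < b) {x : ℝ} (hx : 0 < x) :
    (Real.log (a+b*μ) - Real.log μ + a/(a+b*μ)) + (-(a/(μ*(a+b*μ))))*x + Real.log x
      ≤ Real.log (a + b*x) := by
  have hm : 0 < a + b*μ := by nlinarith
  have hax : 0 < a + b*x := by nlinarith
  have h1 := Real.log_le_sub_one_of_pos
    (show 0 < (x*(a+b*μ))/(μ*(a+b*x)) by positivity)
  rw [Real.log_div (by positivity) (by positivity), Real.log_mul hx.ne' hm.ne',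
    Real.log_mul hμ.ne' hax.ne'] at h1
  have e3 : (x*(a+b*μ))/(μ*(a+b*x)) - 1 = a*(x-μ)/(μ*(a+b*x)) := by
    field_simp
    ring
  have key : a*(x-μ)/(μ*(a+b*x)) ≤ a*(x-μ)/(μ*(a+b*μ)) := by
    rw [div_le_div_iff₀ (by positivity) (by positivity)]
    nlinarith [mul_nonneg (mul_nonneg (mul_nonneg ha hb.le) hμ.le) (sq_nonneg (x-μ))]
  have e4 : (Real.log (a+b*μ) - Real.log μ + a/(a+b*μ)) + (-(a/(μ*(a+b*μ))))*x
      = Real.log (a+b*μ) - Real.log μ - a*(x-μ)/(μ*(a+b*μ)) := by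
    field_simp
    ring
  linarith

lemma core (hμ : 0 < μ) (ha : 0 ≤ a) (hb : 0 < b) :
    Real.log (a + b*μ) - Real.eulerMascheroniConstant
        ≤ μ⁻¹ * ∫ x in Ioi (0:ℝ), Real.log (a + b*x) * rexp (-(μ⁻¹*x))
    ∧ μ⁻¹ * ∫ x in Ioi (0:ℝ), Real.log (a + b*x) * rexp (-(μ⁻¹*x))
        ≤ Real.log (a + b*μ) := by
  have hc : (0:ℝ) < μ⁻¹ := inv_pos.2 hμ
  have hm : 0 < a + b*μ := by nlinarith
  have hfint := int_logab_exp ha hb hc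
  constructor
  · -- lower bound
    set p : ℝ := Real.log (a+b*μ) - Real.log μ + a/(a+b*μ) with hp
    set q : ℝ := -(a/(μ*(a+b*μ))) with hq
    have hgint : IntegrableOn
        (fun x => p * rexp (-(μ⁻¹*x)) + q*(x*rexp (-(μ⁻¹*x))) + Real.log x * rexp (-(μ⁻¹*x)))
        (Ioi (0:ℝ)) :=
      (((int_exp hc).const_mul p).add ((int_x_exp hc).const_mul q)).add (int_log_exp hc)
    have hmono : (∫ x in Ioi (0:ℝ),
          (p * rexp (-(μ⁻¹*x)) + q*(x*rexp (-(μ⁻¹*x))) + Real.log x * rexp (-(μ⁻¹*x))))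
        ≤ ∫ x in Ioi (0:ℝ), Real.log (a + b*x) * rexp (-(μ⁻¹*x)) := by
      refine setIntegral_mono_on hgint hfint measurableSet_Ioi fun x hx => ?_
      have hx0 : (0:ℝ) < x := hx
      have he : (0:ℝ) < rexp (-(μ⁻¹*x)) := exp_pos _
      have hkey := pointwise_lower hμ ha hb hx0
      have e5 : p * rexp (-(μ⁻¹*x)) + q*(x*rexp (-(μ⁻¹*x))) + Real.log x * rexp (-(μ⁻¹*x))
          = (p + q*x + Real.log x) * rexp (-(μ⁻¹*x)) := by ring
      rw [e5]
      exact mul_le_mul_of_nonneg_right hkey he.le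
    have hgval : (∫ x in Ioi (0:ℝ),
          (p * rexp (-(μ⁻¹*x)) + q*(x*rexp (-(μ⁻¹*x))) + Real.log x * rexp (-(μ⁻¹*x))))
        = p*μ + q*μ^2 + μ*(Real.log μ - Real.eulerMascheroniConstant) := by
      have hA : IntegrableOn (fun x => p * rexp (-(μ⁻¹*x)) + q*(x*rexp (-(μ⁻¹*x))))
          (Ioi (0:ℝ)) := by
        exact ((int_exp hc).const_mul p).add ((int_x_exp hc).const_mul q)
      rw [integral_add hA (int_log_exp hc),
        integral_add ((int_exp hc).const_mul p) ((int_x_exp hc).const_mul q),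
        integral_const_mul _ _, integral_const_mul _ _, eq_exp hμ, eq_x_exp hμ, eq_log_exp hμ]
    have hfinal : p*μ + q*μ^2 + μ*(Real.log μ - Real.eulerMascheroniConstant)
        = μ * (Real.log (a+b*μ) - Real.eulerMascheroniConstant) := by
      rw [hp, hq]
      field_simp
      ring
    have := mul_le_mul_of_nonneg_left hmono hc.le
    rw [hgval, hfinal] at this
    calc Real.log (a + b*μ) - Real.eulerMascheroniConstant
        = μ⁻¹ * (μ * (Real.log (a+b*μ) - Real.eulerMascheroniConstant)) := by
          field_simp
      _ ≤ _ := this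
  · -- upper bound
    set p : ℝ := Real.log (a+b*μ) - (b/(a+b*μ))*μ with hp
    set q : ℝ := b/(a+b*μ) with hq
    have hgint : IntegrableOn
        (fun x => p * rexp (-(μ⁻¹*x)) + q*(x*rexp (-(μ⁻¹*x)))) (Ioi (0:ℝ)) :=
      ((int_exp hc).const_mul p).add ((int_x_exp hc).const_mul q)
    have hmono : (∫ x in Ioi (0:ℝ), Real.log (a + b*x) * rexp (-(μ⁻¹*x)))
        ≤ ∫ x in Ioi (0:ℝ), (p * rexp (-(μ⁻¹*x)) + q*(x*rexp (-(μ⁻¹*x)))) := by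
      refine setIntegral_mono_on hfint hgint measurableSet_Ioi fun x hx => ?_
      have hx0 : (0:ℝ) < x := hx
      have he : (0:ℝ) < rexp (-(μ⁻¹*x)) := exp_pos _
      have hkey := pointwise_upper hμ ha hb hx0
      have e5 : p * rexp (-(μ⁻¹*x)) + q*(x*rexp (-(μ⁻¹*x)))
          = (p + q*x) * rexp (-(μ⁻¹*x)) := by ring
      rw [e5]
      exact mul_le_mul_of_nonneg_right hkey he.le
    have hgval : (∫ x in Ioi (0:ℝ), (p * rexp (-(μ⁻¹*x)) + q*(x*rexp (-(μ⁻¹*x)))))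
        = p*μ + q*μ^2 := by
      rw [integral_add ((int_exp hc).const_mul p) ((int_x_exp hc).const_mul q),
        integral_const_mul _ _, integral_const_mul _ _, eq_exp hμ, eq_x_exp hμ]
    have hfinal : p*μ + q*μ^2 = μ * Real.log (a+b*μ) := by
      rw [hp, hq]
      field_simp
      ring
    have := mul_le_mul_of_nonneg_left hmono hc.le
    rw [hgval, hfinal] at this
    calc μ⁻¹ * ∫ x in Ioi (0:ℝ), Real.log (a + b*x) * rexp (-(μ⁻¹*x))
        ≤ μ⁻¹ * (μ * Real.log (a+b*μ)) := this
      _ = Real.log (a+b*μ) := by field_simp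

end ExpJensen2

/-- Jensen gap for the exponential distribution: for ξ exponentially distributed with
mean μ > 0 (density (1/μ)·exp(−x/μ) on [0,∞)) and constants a ≥ 0, b > 0,
  log₂(a + bμ) − γ·log₂ e ≤ E[log₂(a + bξ)] ≤ log₂(a + bμ). -/
theorem exponential_log_jensen_gap (μ a b : ℝ) (hμ : 0 < μ) (ha : 0 ≤ a) (hb : 0 < b) :
    Real.logb 2 (a + b * μ) - Real.eulerMascheroniConstant * Real.logb 2 (Real.exp 1)
        ≤ ∫ x in Set.Ioi (0 : ℝ), Real.logb 2 (a + b * x) * ((1 / μ) * Real.exp (-x / μ))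
    ∧ ∫ x in Set.Ioi (0 : ℝ), Real.logb 2 (a + b * x) * ((1 / μ) * Real.exp (-x / μ))
        ≤ Real.logb 2 (a + b * μ) := by
  obtain ⟨h1, h2⟩ := ExpJensen2.core hμ ha hb
  have hl2 : 0 < Real.log 2 := Real.log_pos one_lt_two
  have hrw : ∀ x : ℝ, Real.logb 2 (a + b * x) * ((1 / μ) * Real.exp (-x / μ))
      = μ⁻¹ * (Real.log (a + b * x) * rexp (-(μ⁻¹ * x))) / Real.log 2 := by
    intro x
    rw [← Real.log_div_log, show -x/μ = -(μ⁻¹*x) by ring]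
    ring
  simp_rw [hrw]
  rw [integral_div, integral_const_mul _ _]
  constructor
  · have e : Real.logb 2 (a + b * μ) - Real.eulerMascheroniConstant * Real.logb 2 (Real.exp 1)
        = (Real.log (a + b*μ) - Real.eulerMascheroniConstant) / Real.log 2 := by
      rw [← Real.log_div_log, ← Real.log_div_log, Real.log_exp]
      ring
    rw [e]
    gcongr
  · rw [← Real.log_div_log]
    gcongr
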